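/- Let k ≥ 1, ρ > 0 and λ ∈ ℂ. Suppose φ₁, φ₂ : [0, ∞) → ℂ are continuous on [0, ∞), twice differentiable on (0, ∞), both satisfy φ''(r) + (k/ρ)·coth(r/ρ)·φ'(r) + λ·φ(r) = 0 for all r > 0, and φ₁(0) = φ₂(0) = 1. Then φ₁(r) = φ₂(r) for all r ∈ [0, ∞); i.e., for each complex eigenvalue λ there is at most one radial eigenfunction of the hyperbolic Laplacian that is continuous at the origin and assumes the value 1 there. -/

import Mathlib

open MeasureTheory Metric Set

/-- Let `k ≥ 1`, `ρ > 0`, `λ ∈ ℂ`.  If `φ₁, φ₂ : [0,∞) → ℂ` are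
continuous on `[0,∞)`, twice differentiable on `(0,∞)`, both satisfy
`φ''(r) + (k/ρ)·coth(r/ρ)·φ'(r) + λ·φ(r) = 0` for all `r > 0`, and
`φ₁(0) = φ₂(0) = 1`, then `φ₁ ≡ φ₂` on `[0,∞)`: a radial eigenfunction of the
hyperbolic Laplacian with value `1` at the origin is unique for each eigenvalue. -/
lemma aux_sinh_le {x : ℝ} (hx : 0 ≤ x) : Real.sinh x ≤ x * Real.cosh x := by
  have h : ∀ y : ℝ, HasDerivAt (fun t => t * Real.cosh t - Real.sinh t)
      (y * Real.sinh y) y := by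
    intro y
    have h1 : HasDerivAt (fun t => t * Real.cosh t - Real.sinh t)
        (1 * Real.cosh y + y * Real.sinh y - Real.cosh y) y :=
      ((hasDerivAt_id y).mul (Real.hasDerivAt_cosh y)).sub (Real.hasDerivAt_sinh y)
    convert h1 using 1; ring
  have mono : MonotoneOn (fun t => t * Real.cosh t - Real.sinh t) (Set.Ici 0) := by
    apply monotoneOn_of_deriv_nonneg (convex_Ici 0)
    · exact Continuous.continuousOn (by fun_prop)
    · intro y hy
      exact (h y).differentiableAt.differentiableWithinAt
    · intro y hy
      rw [(h y).deriv]
      rw [interior_Ici] at hy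
      exact mul_nonneg hy.le (Real.sinh_nonneg_iff.mpr hy.le)
  have := mono (self_mem_Ici) hx hx
  simpa using this

set_option maxHeartbeats 2000000 in
lemma key (k : ℕ) (hk : 1 ≤ k) (ρ : ℝ) (hρ : 0 < ρ) (l : ℂ) (ψ : ℝ → ℂ)
    (hcont : ContinuousOn ψ (Set.Ici 0))
    (hd1 : ∀ r : ℝ, 0 < r → DifferentiableAt ℝ ψ r)
    (hd2 : ∀ r : ℝ, 0 < r → DifferentiableAt ℝ (deriv ψ) r)
    (heq : ∀ r : ℝ, 0 < r →
      deriv (deriv ψ) r + ((k : ℂ) / (ρ : ℂ)) * ((Real.cosh (r / ρ) / Real.sinh (r / ρ) : ℝ) : ℂ)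
        * deriv ψ r + l * ψ r = 0)
    (h0 : ψ 0 = 0) : ∀ r ∈ Set.Ici (0:ℝ), ψ r = 0 := by
  set σ : ℝ → ℝ := fun t => Real.sinh (t / ρ) ^ k with hσdef
  set g : ℝ → ℂ := fun t => (σ t : ℂ) * deriv ψ t with hgdef
  set I : ℝ → ℂ := fun r => ∫ t in (0:ℝ)..r, (σ t : ℂ) * ψ t with hIdef
  have hσc : Continuous σ := (Real.continuous_sinh.comp (continuous_id.div_const ρ)).pow k
  have hsinhpos : ∀ t : ℝ, 0 < t → 0 < Real.sinh (t / ρ) := fun t ht =>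
    Real.sinh_pos_iff.mpr (div_pos ht hρ)
  have hσpos : ∀ t : ℝ, 0 < t → 0 < σ t := fun t ht => pow_pos (hsinhpos t ht) k
  have hσmono : ∀ a b : ℝ, 0 ≤ a → a ≤ b → σ a ≤ σ b := by
    intro a b ha hab
    apply pow_le_pow_left₀ (Real.sinh_nonneg_iff.mpr (div_nonneg ha hρ.le))
    exact Real.sinh_le_sinh.mpr (by gcongr)
  have hψ'cont : ContinuousOn (deriv ψ) (Set.Ioi 0) := fun r hr =>
    ((hd2 r hr).continuousAt).continuousWithinAt
  have hIcont : ContinuousOn (fun t => (σ t : ℂ) * ψ t) (Set.Ici 0) :=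
    (Complex.continuous_ofReal.comp hσc).continuousOn.mul hcont
  -- derivative of g
  have hgderiv : ∀ r : ℝ, 0 < r → HasDerivAt g (-(l * ((σ r : ℂ) * ψ r))) r := by
    intro r hr
    have hS : Real.sinh (r / ρ) ≠ 0 := (hsinhpos r hr).ne'
    have h1 : HasDerivAt (fun t : ℝ => t / ρ) (1 / ρ) r := (hasDerivAt_id r).div_const ρ
    have h2 : HasDerivAt (fun t : ℝ => Real.sinh (t / ρ))
        (Real.cosh (r / ρ) * (1 / ρ)) r := by
      have := (Real.hasDerivAt_sinh (r / ρ)).comp r h1; exact this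
    have h3 : HasDerivAt σ ((k : ℝ) * Real.sinh (r / ρ) ^ (k - 1)
        * (Real.cosh (r / ρ) * (1 / ρ))) r := h2.pow k
    have h4 := (h3.ofReal_comp).mul ((hd2 r hr).hasDerivAt)
    have hψ'' : deriv (deriv ψ) r = -(((k : ℂ) / (ρ : ℂ)) *
        ((Real.cosh (r / ρ) / Real.sinh (r / ρ) : ℝ) : ℂ) * deriv ψ r + l * ψ r) := by
      have := heq r hr
      linear_combination this
    rw [hψ''] at h4
    refine h4.congr_deriv (Eq.symm ?_)
    have hpow : (Real.sinh (r / ρ) : ℂ) ^ (k - 1) * (Real.sinh (r / ρ) : ℂ) =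
        (Real.sinh (r / ρ) : ℂ) ^ k := by
      rw [← pow_succ]
      congr 1
      omega
    have hSc : (Real.sinh (r / ρ) : ℂ) ≠ 0 := by
      exact_mod_cast hS
    have hρc : (ρ : ℂ) ≠ 0 := by exact_mod_cast hρ.ne'
    simp only [hσdef]
    simp only [Complex.ofReal_mul, Complex.ofReal_div, Complex.ofReal_pow,
      Complex.ofReal_natCast, Complex.ofReal_one]
    set S : ℂ := (Real.sinh (r / ρ) : ℂ)
    set C : ℂ := (Real.cosh (r / ρ) : ℂ)
    field_simp
    linear_combination (-(k:ℂ) * C * deriv ψ r) * hpow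
  -- integrability of the I-integrand on subintervals of [0,∞)
  have hIint : ∀ a b : ℝ, 0 ≤ a → 0 ≤ b →
      IntervalIntegrable (fun t => (σ t : ℂ) * ψ t) volume a b := by
    intro a b ha hb
    apply ContinuousOn.intervalIntegrable
    exact hIcont.mono (fun x hx => le_trans (le_inf ha hb) hx.1)
  have hftc : ∀ a b : ℝ, 0 < a → a ≤ b →
      g b - g a = ∫ t in a..b, (-l) * ((σ t : ℂ) * ψ t) := by
    intro a b ha hab
    refine (intervalIntegral.integral_eq_sub_of_hasDerivAt ?_ ?_).symm
    · intro t ht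
      rw [uIcc_of_le hab] at ht
      simpa [neg_mul, mul_assoc] using hgderiv t (lt_of_lt_of_le ha ht.1)
    · exact (hIint a b ha.le (ha.le.trans hab)).const_mul (-l)
  have hconst : ∀ a b : ℝ, 0 < a → a ≤ b → g b + l * I b = g a + l * I a := by
    intro a b ha hab
    have h1 := hftc a b ha hab
    have h2 : I b - I a = ∫ t in a..b, (σ t : ℂ) * ψ t := by
      simp only [hIdef]
      rw [← intervalIntegral.integral_add_adjacent_intervals (hIint 0 a le_rfl ha.le)
        (hIint a b ha.le (ha.le.trans hab))]
      ring
    rw [intervalIntegral.integral_const_mul, ← h2] at h1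
    linear_combination h1
  obtain ⟨L, hgL⟩ : ∃ L : ℂ, ∀ r : ℝ, 0 < r → g r = L - l * I r := by
    refine ⟨g 1 + l * I 1, fun r hr => ?_⟩
    rcases le_total r 1 with h | h
    · have := hconst r 1 hr h; linear_combination -this
    · have := hconst 1 r one_pos h; linear_combination this
  -- bounds on [0,1]
  obtain ⟨Mi, hMi0, hMi⟩ : ∃ M : ℝ, 0 ≤ M ∧ ∀ t ∈ Set.Icc (0:ℝ) 1, ‖(σ t : ℂ) * ψ t‖ ≤ M := by
    obtain ⟨M, hM⟩ := (isCompact_Icc (a := (0:ℝ)) (b := 1)).exists_bound_of_continuousOn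
      (hIcont.mono (fun x hx => hx.1))
    exact ⟨max M 0, le_max_right _ _, fun t ht => (hM t ht).trans (le_max_left _ _)⟩
  obtain ⟨Mp, hMp0, hMp⟩ : ∃ M : ℝ, 0 ≤ M ∧ ∀ t ∈ Set.Icc (0:ℝ) 1, ‖ψ t‖ ≤ M := by
    obtain ⟨M, hM⟩ := (isCompact_Icc (a := (0:ℝ)) (b := 1)).exists_bound_of_continuousOn
      (hcont.mono (fun x hx => hx.1))
    exact ⟨max M 0, le_max_right _ _, fun t ht => (hM t ht).trans (le_max_left _ _)⟩
  have hIbound : ∀ r : ℝ, 0 ≤ r → r ≤ 1 → ‖I r‖ ≤ Mi * r := by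
    intro r h0r h1r
    have h := intervalIntegral.norm_integral_le_of_norm_le_const (a := 0) (b := r) (C := Mi)
      (f := fun t => (σ t : ℂ) * ψ t) ?_
    · simpa [abs_of_nonneg h0r] using h
    · intro x hx
      rw [Set.uIoc_of_le h0r] at hx
      exact hMi x ⟨hx.1.le, hx.2.trans h1r⟩
  have hL0 : L = 0 := by
    by_contra hL
    have hLpos : 0 < ‖L‖ := norm_pos_iff.mpr hL
    set δ : ℝ := min 1 (‖L‖ / (2 * (‖l‖ * Mi + 1))) with hδdef
    have hδpos : 0 < δ := lt_min one_pos (div_pos hLpos (by positivity))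
    have hδ1 : δ ≤ 1 := min_le_left _ _
    have hIδ : ∀ t : ℝ, 0 < t → t ≤ δ → ‖l * I t‖ ≤ ‖L‖ / 2 := by
      intro t ht htδ
      have h1 : ‖l * I t‖ ≤ ‖l‖ * (Mi * t) := by
        rw [norm_mul]
        exact mul_le_mul_of_nonneg_left (hIbound t ht.le (htδ.trans hδ1)) (norm_nonneg l)
      have h2 : ‖l‖ * (Mi * t) ≤ (‖l‖ * Mi + 1) * δ := by
        have h2a := mul_le_mul_of_nonneg_left htδ (mul_nonneg (norm_nonneg l) hMi0)
        nlinarith [hδpos.le]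
      have h3 : (‖l‖ * Mi + 1) * δ ≤ (‖l‖ * Mi + 1) * (‖L‖ / (2 * (‖l‖ * Mi + 1))) :=
        mul_le_mul_of_nonneg_left (min_le_right _ _) (by positivity)
      have h4 : (‖l‖ * Mi + 1) * (‖L‖ / (2 * (‖l‖ * Mi + 1))) = ‖L‖ / 2 := by
        field_simp
      linarith
    set Kc : ℝ := (Real.cosh (δ / ρ) / ρ) ^ k * δ ^ (k - 1) with hKcdef
    have hcoshpos : 0 < Real.cosh (δ / ρ) := Real.cosh_pos _
    have hKcpos : 0 < Kc := by positivity
    have hσle : ∀ t : ℝ, 0 < t → t ≤ δ → σ t ≤ Kc * t := by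
      intro t ht htδ
      have htρ : 0 ≤ t / ρ := by positivity
      have h1 : Real.sinh (t / ρ) ≤ (t / ρ) * Real.cosh (δ / ρ) := by
        refine (aux_sinh_le htρ).trans ?_
        refine mul_le_mul_of_nonneg_left ?_ htρ
        rw [Real.cosh_le_cosh, abs_of_nonneg htρ, abs_of_nonneg (by positivity)]
        gcongr
      calc σ t ≤ ((t / ρ) * Real.cosh (δ / ρ)) ^ k :=
            pow_le_pow_left₀ (Real.sinh_nonneg_iff.mpr htρ) h1 k
        _ = (Real.cosh (δ / ρ) / ρ) ^ k * (t ^ (k - 1) * t) := by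
            rw [show t / ρ * Real.cosh (δ / ρ) = Real.cosh (δ / ρ) / ρ * t from by ring, mul_pow,
              ← pow_succ, Nat.sub_add_cancel hk]
        _ = ((Real.cosh (δ / ρ) / ρ) ^ k * t ^ (k - 1)) * t := by ring
        _ ≤ ((Real.cosh (δ / ρ) / ρ) ^ k * δ ^ (k - 1)) * t := by
            gcongr
        _ = Kc * t := by rw [hKcdef]
    set c' : ℝ := ‖L‖ ^ 2 / (2 * Kc) with hc'def
    have hc'pos : 0 < c' := by positivity
    set u : ℝ → ℝ := fun t => ((starRingEnd ℂ) L * ψ t).re with hudef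
    have hu' : ∀ t : ℝ, 0 < t → HasDerivAt u (((starRingEnd ℂ) L * deriv ψ t).re) t := by
      intro t ht
      have h1 : HasDerivAt (fun s => (starRingEnd ℂ) L * ψ s) ((starRingEnd ℂ) L * deriv ψ t) t :=
        ((hd1 t ht).hasDerivAt).const_mul _
      exact Complex.reCLM.hasFDerivAt.comp_hasDerivAt t h1
    have hre_lb : ∀ t : ℝ, 0 < t → t ≤ δ → c' / t ≤ ((starRingEnd ℂ) L * deriv ψ t).re := by
      intro t ht htδ
      have hgt := hgL t ht
      have hσt := hσpos t ht
      have hψ' : deriv ψ t = (((σ t)⁻¹ : ℝ) : ℂ) * (L - l * I t) := by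
        have : (σ t : ℂ) ≠ 0 := by exact_mod_cast hσt.ne'
        rw [← hgt]
        simp only [hgdef]
        push_cast
        field_simp
      have hre1 : ‖L‖ ^ 2 / 2 ≤ ((starRingEnd ℂ) L * (L - l * I t)).re := by
        have e1 : (starRingEnd ℂ) L * (L - l * I t)
            = ((‖L‖ ^ 2 : ℝ) : ℂ) - (starRingEnd ℂ) L * (l * I t) := by
          rw [mul_sub]
          congr 1
          rw [mul_comm, Complex.mul_conj, Complex.normSq_eq_norm_sq]
        have habs : |((starRingEnd ℂ) L * (l * I t)).re| ≤ ‖L‖ * (‖L‖ / 2) := by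
          calc |((starRingEnd ℂ) L * (l * I t)).re| ≤ ‖(starRingEnd ℂ) L * (l * I t)‖ :=
              Complex.abs_re_le_norm _
            _ = ‖L‖ * ‖l * I t‖ := by rw [norm_mul, RCLike.norm_conj]
            _ ≤ ‖L‖ * (‖L‖ / 2) := mul_le_mul_of_nonneg_left (hIδ t ht htδ) (norm_nonneg _)
        rw [e1, Complex.sub_re, Complex.ofReal_re]
        have := abs_le.mp habs
        nlinarith [this.1, this.2]
      have hmulre : ((starRingEnd ℂ) L * ((((σ t)⁻¹ : ℝ) : ℂ) * (L - l * I t))).re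
          = (σ t)⁻¹ * ((starRingEnd ℂ) L * (L - l * I t)).re := by
        rw [show (starRingEnd ℂ) L * ((((σ t)⁻¹ : ℝ) : ℂ) * (L - l * I t))
            = (((σ t)⁻¹ : ℝ) : ℂ) * ((starRingEnd ℂ) L * (L - l * I t)) from by ring,
          Complex.re_ofReal_mul]
      rw [hψ', hmulre]
      have h5 : (Kc * t)⁻¹ ≤ (σ t)⁻¹ := inv_anti₀ hσt (hσle t ht htδ)
      calc c' / t = (Kc * t)⁻¹ * (‖L‖ ^ 2 / 2) := by
            rw [hc'def, mul_inv]
            have h7 : Kc ≠ 0 := hKcpos.ne'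
            have h8 : t ≠ 0 := ht.ne'
            field_simp
        _ ≤ (σ t)⁻¹ * (‖L‖ ^ 2 / 2) := mul_le_mul_of_nonneg_right h5 (by positivity)
        _ ≤ (σ t)⁻¹ * ((starRingEnd ℂ) L * (L - l * I t)).re :=
            mul_le_mul_of_nonneg_left hre1 (inv_nonneg.mpr hσt.le)
    set a : ℝ := δ * Real.exp (-((2 * ‖L‖ * Mp + 1) / c')) with hadef
    have hapos : 0 < a := by positivity
    have haδ : a ≤ δ := by
      rw [hadef]
      nth_rewrite 2 [← mul_one δ]
      refine mul_le_mul_of_nonneg_left ?_ hδpos.le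
      refine Real.exp_le_one_iff.mpr ?_
      rw [neg_nonpos]
      positivity
    have hftc_u : ∫ t in a..δ, ((starRingEnd ℂ) L * deriv ψ t).re = u δ - u a := by
      apply intervalIntegral.integral_eq_sub_of_hasDerivAt
      · intro t ht
        rw [uIcc_of_le haδ] at ht
        exact hu' t (lt_of_lt_of_le hapos ht.1)
      · apply ContinuousOn.intervalIntegrable
        apply Complex.continuous_re.comp_continuousOn
        refine ContinuousOn.mono (continuousOn_const.mul hψ'cont) ?_
        intro x hx
        rw [uIcc_of_le haδ] at hx
        exact lt_of_lt_of_le hapos hx.1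
    have hmono : c' * Real.log (δ / a) ≤ u δ - u a := by
      rw [← hftc_u]
      have h6 : (∫ t in a..δ, c' * (1 / t)) = c' * Real.log (δ / a) := by
        rw [intervalIntegral.integral_const_mul, integral_one_div]
        intro hmem
        rw [uIcc_of_le haδ] at hmem
        exact absurd hmem.1 (not_le.mpr hapos)
      rw [← h6]
      apply intervalIntegral.integral_mono_on haδ
      · apply ContinuousOn.intervalIntegrable
        apply continuousOn_const.mul
        apply ContinuousOn.div continuousOn_const continuousOn_id
        intro x hx
        rw [uIcc_of_le haδ] at hx
        exact (lt_of_lt_of_le hapos hx.1).ne'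
      · apply ContinuousOn.intervalIntegrable
        apply Complex.continuous_re.comp_continuousOn
        refine ContinuousOn.mono (continuousOn_const.mul hψ'cont) ?_
        intro x hx
        rw [uIcc_of_le haδ] at hx
        exact lt_of_lt_of_le hapos hx.1
      · intro x hx
        have hx0 : 0 < x := lt_of_lt_of_le hapos hx.1
        calc c' * (1 / x) = c' / x := by ring
          _ ≤ _ := hre_lb x hx0 hx.2
    have hlog : Real.log (δ / a) = (2 * ‖L‖ * Mp + 1) / c' := by
      have : δ / a = Real.exp ((2 * ‖L‖ * Mp + 1) / c') := by
        rw [hadef, Real.exp_neg]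
        field_simp
      rw [this, Real.log_exp]
    have hub : u δ - u a ≤ 2 * (‖L‖ * Mp) := by
      have b1 : |u δ| ≤ ‖L‖ * Mp := by
        calc |u δ| ≤ ‖(starRingEnd ℂ) L * ψ δ‖ := Complex.abs_re_le_norm _
          _ = ‖L‖ * ‖ψ δ‖ := by rw [norm_mul, RCLike.norm_conj]
          _ ≤ ‖L‖ * Mp := mul_le_mul_of_nonneg_left (hMp δ ⟨hδpos.le, hδ1⟩) (norm_nonneg _)
      have b2 : |u a| ≤ ‖L‖ * Mp := by
        calc |u a| ≤ ‖(starRingEnd ℂ) L * ψ a‖ := Complex.abs_re_le_norm _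
          _ = ‖L‖ * ‖ψ a‖ := by rw [norm_mul, RCLike.norm_conj]
          _ ≤ ‖L‖ * Mp :=
            mul_le_mul_of_nonneg_left (hMp a ⟨hapos.le, haδ.trans hδ1⟩) (norm_nonneg _)
      have := abs_le.mp b1
      have := abs_le.mp b2
      cases abs_le.mp b1 with
      | intro p q => cases abs_le.mp b2 with
        | intro p' q' => linarith
    rw [hlog] at hmono
    have hcc : c' * ((2 * ‖L‖ * Mp + 1) / c') = 2 * ‖L‖ * Mp + 1 := by
      field_simp
    rw [hcc] at hmono
    nlinarith [norm_nonneg L, hMp0]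
  -- with L = 0
  have hg0 : ∀ r : ℝ, 0 < r → (σ r : ℂ) * deriv ψ r = -(l * I r) := by
    intro r hr
    have h := hgL r hr
    rw [hL0] at h
    simpa [hgdef] using h
  set F : ℝ → ℝ := fun t => ‖ψ (max t 0)‖ with hFdef
  have hFcont : Continuous F := by
    apply Continuous.norm
    exact hcont.comp_continuous (continuous_id.max continuous_const) (fun x => mem_Ici.mpr (le_max_right _ _))
  have hFnonneg : ∀ t : ℝ, 0 ≤ F t := fun t => norm_nonneg _
  have hFeq : ∀ t : ℝ, 0 ≤ t → F t = ‖ψ t‖ := by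
    intro t ht
    simp only [hFdef, max_eq_left ht]
  set G : ℝ → ℝ := fun r => ∫ t in (0:ℝ)..r, F t with hGdef
  have hG' : ∀ x : ℝ, HasDerivAt G (F x) x := by
    intro x
    exact intervalIntegral.integral_hasDerivAt_right
      (hFcont.intervalIntegrable (μ := volume) 0 x) (hFcont.stronglyMeasurableAtFilter _ _)
      hFcont.continuousAt
  have hGcont : Continuous G := by
    rw [continuous_iff_continuousAt]
    exact fun x => (hG' x).differentiableAt.continuousAt
  have hGnonneg : ∀ r : ℝ, 0 ≤ r → 0 ≤ G r := by
    intro r hr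
    exact intervalIntegral.integral_nonneg hr (fun u _ => hFnonneg u)
  have hGmono : ∀ a b : ℝ, a ≤ b → G a ≤ G b := by
    intro a b hab
    have h := intervalIntegral.integral_add_adjacent_intervals
      (hFcont.intervalIntegrable (μ := volume) 0 a) (hFcont.intervalIntegrable (μ := volume) a b)
    have h2 : 0 ≤ ∫ t in a..b, F t :=
      intervalIntegral.integral_nonneg hab (fun u _ => hFnonneg u)
    simp only [hGdef]
    rw [← h]
    linarith
  have hσnn : ∀ x : ℝ, 0 ≤ x → 0 ≤ σ x := fun x hx =>
    pow_nonneg (Real.sinh_nonneg_iff.mpr (div_nonneg hx hρ.le)) k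
  have hInorm : ∀ t : ℝ, 0 < t → ‖I t‖ ≤ σ t * G t := by
    intro t ht
    calc ‖I t‖ ≤ ∫ u in (0:ℝ)..t, ‖(σ u : ℂ) * ψ u‖ :=
        intervalIntegral.norm_integral_le_integral_norm ht.le
      _ ≤ ∫ u in (0:ℝ)..t, σ t * F u := by
          apply intervalIntegral.integral_mono_on ht.le
          · apply ContinuousOn.intervalIntegrable
            apply ContinuousOn.norm
            exact hIcont.mono (fun x hx => by
              rw [uIcc_of_le ht.le] at hx; exact hx.1)
          · exact (continuous_const.mul hFcont).intervalIntegrable (μ := volume) _ _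
          · intro x hx
            show ‖(σ x : ℂ) * ψ x‖ ≤ σ t * F x
            rw [norm_mul, Complex.norm_real, Real.norm_eq_abs, abs_of_nonneg (hσnn x hx.1), hFeq x hx.1]
            exact mul_le_mul_of_nonneg_right (hσmono x t hx.1 hx.2) (norm_nonneg _)
      _ = σ t * G t := by rw [intervalIntegral.integral_const_mul]
  have hψ'le : ∀ t : ℝ, 0 < t → ‖deriv ψ t‖ ≤ ‖l‖ * G t := by
    intro t ht
    have hσt := hσpos t ht
    have h2 : σ t * ‖deriv ψ t‖ = ‖(σ t : ℂ) * deriv ψ t‖ := by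
      rw [norm_mul, Complex.norm_real, Real.norm_eq_abs, abs_of_pos hσt]
    have h3 : ‖(σ t : ℂ) * deriv ψ t‖ ≤ ‖l‖ * (σ t * G t) := by
      rw [hg0 t ht, norm_neg, norm_mul]
      exact mul_le_mul_of_nonneg_left (hInorm t ht) (norm_nonneg l)
    rw [← h2] at h3
    have h4 : σ t * ‖deriv ψ t‖ ≤ σ t * (‖l‖ * G t) := by linarith [h3]
    exact (mul_le_mul_iff_right₀ hσt).mp h4
  have hψle : ∀ r : ℝ, 0 < r → ‖ψ r‖ ≤ ‖l‖ * r * G r := by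
    intro r hr
    have key : ∀ a : ℝ, 0 < a → a ≤ r → ‖ψ r‖ ≤ ‖ψ a‖ + ‖l‖ * r * G r := by
      intro a ha har
      have hGrnn : 0 ≤ G r := hGnonneg r hr.le
      have hftcψ : ∫ t in a..r, deriv ψ t = ψ r - ψ a := by
        apply intervalIntegral.integral_eq_sub_of_hasDerivAt
        · intro t ht
          rw [uIcc_of_le har] at ht
          exact (hd1 t (lt_of_lt_of_le ha ht.1)).hasDerivAt
        · apply ContinuousOn.intervalIntegrable
          refine hψ'cont.mono ?_
          intro x hx
          rw [uIcc_of_le har] at hx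
          exact lt_of_lt_of_le ha hx.1
      have h4 : ‖ψ r - ψ a‖ ≤ ‖l‖ * r * G r := by
        rw [← hftcψ]
        calc ‖∫ t in a..r, deriv ψ t‖ ≤ ∫ t in a..r, ‖deriv ψ t‖ :=
            intervalIntegral.norm_integral_le_integral_norm har
          _ ≤ ∫ _t in a..r, ‖l‖ * G r := by
              apply intervalIntegral.integral_mono_on har
              · apply ContinuousOn.intervalIntegrable
                apply ContinuousOn.norm
                refine hψ'cont.mono ?_
                intro x hx
                rw [uIcc_of_le har] at hx
                exact lt_of_lt_of_le ha hx.1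
              · exact intervalIntegrable_const
              · intro x hx
                exact (hψ'le x (lt_of_lt_of_le ha hx.1)).trans
                  (mul_le_mul_of_nonneg_left (hGmono x r hx.2) (norm_nonneg l))
          _ = ‖l‖ * G r * (r - a) := by
              rw [intervalIntegral.integral_const, smul_eq_mul]
              ring
          _ ≤ ‖l‖ * r * G r := by nlinarith [mul_nonneg (mul_nonneg (norm_nonneg l) hGrnn) ha.le]
      calc ‖ψ r‖ = ‖ψ a + (ψ r - ψ a)‖ := by congr 1; ring
        _ ≤ ‖ψ a‖ + ‖ψ r - ψ a‖ := norm_add_le _ _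
        _ ≤ ‖ψ a‖ + ‖l‖ * r * G r := by linarith
    refine le_of_forall_pos_le_add ?_
    intro ε hε
    have hc0 : ContinuousWithinAt ψ (Set.Ici 0) 0 := hcont 0 self_mem_Ici
    have ht0 := hc0.tendsto
    rw [h0] at ht0
    rw [Metric.tendsto_nhdsWithin_nhds] at ht0
    obtain ⟨d, hd, hball⟩ := ht0 ε hε
    set a : ℝ := min (d / 2) r with hadef2
    have hapos : 0 < a := lt_min (by linarith) hr
    have har : a ≤ r := min_le_right _ _
    have hasmall : dist a 0 < d := by
      rw [Real.dist_eq, sub_zero, abs_of_pos hapos]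
      calc a ≤ d / 2 := min_le_left _ _
        _ < d := by linarith
    have hna : ‖ψ a‖ < ε := by
      have := hball (mem_Ici.mpr hapos.le) hasmall
      rwa [dist_zero_right] at this
    have := key a hapos har
    linarith
  intro r hr
  rcases eq_or_lt_of_le (mem_Ici.mp hr) with h | h
  · rw [← h]
    exact h0
  · set T : ℝ := r + 1 with hTdef
    set K : ℝ := ‖l‖ * T with hKdef
    have hGron := norm_le_gronwallBound_of_norm_deriv_right_le (f := G) (f' := F)
      (δ := 0) (K := K) (ε := 0) (a := 0) (b := T)
      hGcont.continuousOn (fun x _ => (hG' x).hasDerivWithinAt) (by simp [hGdef]) ?_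
    · have hGr : G r ≤ 0 := by
        have h1 := hGron r ⟨h.le, by linarith⟩
        rwa [sub_zero, gronwallBound_ε0_δ0, Real.norm_of_nonneg (hGnonneg r h.le)] at h1
      have hGr0 : G r = 0 := le_antisymm hGr (hGnonneg r h.le)
      have h2 := hψle r h
      rw [hGr0, mul_zero] at h2
      exact norm_le_zero_iff.mp h2
    · intro x hx
      rw [Real.norm_of_nonneg (hFnonneg x), Real.norm_of_nonneg (hGnonneg x hx.1), add_zero]
      rcases eq_or_lt_of_le hx.1 with h' | h'
      · rw [← h', hFeq 0 le_rfl, h0, norm_zero]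
        have : (0:ℝ) ≤ K := by
          rw [hKdef, hTdef]
          positivity
        exact mul_nonneg this (hGnonneg 0 le_rfl)
      · rw [hFeq x h'.le]
        calc ‖ψ x‖ ≤ ‖l‖ * x * G x := hψle x h'
          _ ≤ K * G x := by
            apply mul_le_mul_of_nonneg_right _ (hGnonneg x hx.1)
            rw [hKdef]
            have := hx.2.le
            nlinarith [norm_nonneg l]

theorem radial_eigenfunction_unique
    (k : ℕ) (hk : 1 ≤ k) (ρ : ℝ) (hρ : 0 < ρ) (l : ℂ)
    (φ₁ φ₂ : ℝ → ℂ)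
    (h₁cont : ContinuousOn φ₁ (Set.Ici 0))
    (h₂cont : ContinuousOn φ₂ (Set.Ici 0))
    (h₁diff : ∀ r : ℝ, 0 < r → DifferentiableAt ℝ φ₁ r ∧ DifferentiableAt ℝ (deriv φ₁) r)
    (h₂diff : ∀ r : ℝ, 0 < r → DifferentiableAt ℝ φ₂ r ∧ DifferentiableAt ℝ (deriv φ₂) r)
    (h₁eq : ∀ r : ℝ, 0 < r →
      deriv (deriv φ₁) r +
          ((k : ℂ) / (ρ : ℂ)) * ((Real.cosh (r / ρ) / Real.sinh (r / ρ) : ℝ) : ℂ) *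
            deriv φ₁ r + l * φ₁ r = 0)
    (h₂eq : ∀ r : ℝ, 0 < r →
      deriv (deriv φ₂) r +
          ((k : ℂ) / (ρ : ℂ)) * ((Real.cosh (r / ρ) / Real.sinh (r / ρ) : ℝ) : ℂ) *
            deriv φ₂ r + l * φ₂ r = 0)
    (h₁zero : φ₁ 0 = 1) (h₂zero : φ₂ 0 = 1) :
    ∀ r ∈ Set.Ici (0 : ℝ), φ₁ r = φ₂ r := by

  set ψ : ℝ → ℂ := fun r => φ₁ r - φ₂ r with hψdef
  have hψd1 : ∀ r : ℝ, 0 < r → DifferentiableAt ℝ ψ r := fun r hr =>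
    (h₁diff r hr).1.sub (h₂diff r hr).1
  have hψderiv : ∀ r : ℝ, 0 < r → deriv ψ r = deriv φ₁ r - deriv φ₂ r := fun r hr =>
    deriv_sub (h₁diff r hr).1 (h₂diff r hr).1
  have hev : ∀ r : ℝ, 0 < r →
      (fun x => deriv ψ x) =ᶠ[nhds r] fun x => deriv φ₁ x - deriv φ₂ x := by
    intro r hr
    filter_upwards [Ioi_mem_nhds hr] with x hx
    exact hψderiv x hx
  have hψd2 : ∀ r : ℝ, 0 < r → DifferentiableAt ℝ (deriv ψ) r := by
    intro r hr
    exact ((h₁diff r hr).2.sub (h₂diff r hr).2).congr_of_eventuallyEq (hev r hr)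
  have hψd2' : ∀ r : ℝ, 0 < r →
      deriv (deriv ψ) r = deriv (deriv φ₁) r - deriv (deriv φ₂) r := by
    intro r hr
    rw [(hev r hr).deriv_eq]
    exact deriv_sub (h₁diff r hr).2 (h₂diff r hr).2
  have hkey := key k hk ρ hρ l ψ (h₁cont.sub h₂cont) hψd1 hψd2 ?_ ?_
  · intro r hr
    have := hkey r hr
    exact sub_eq_zero.mp this
  · intro r hr
    rw [hψd2' r hr, hψderiv r hr]
    have e1 := h₁eq r hr
    have e2 := h₂eq r hr
    simp only [hψdef]
    linear_combination e1 - e2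
  · simp only [hψdef, h₁zero, h₂zero, sub_self]
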